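/- Let n ≥ 3. For a random word s_{i_1} s_{i_2} s_{i_3} of length 3, with i_1, i_2, i_3 independent and uniform in {1, …, n}, the expected number of inversions of the product permutation in S_{n+1} equals 3 − 6/n + 8/n² − 4/n³. -/

import Mathlib

/-- The adjacent transposition `s_i` swapping positions `i` and `i+1` in `S_{n+1}`. -/
def adjT (n : ℕ) (i : Fin n) : Equiv.Perm (Fin (n + 1)) :=
  Equiv.swap i.castSucc i.succ

/-- The number of inversions of a permutation of `{1, …, n+1}`. -/
def invCount (n : ℕ) (π : Equiv.Perm (Fin (n + 1))) : ℕ :=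
  (Finset.univ.filter fun p : Fin (n + 1) × Fin (n + 1) => p.1 < p.2 ∧ π p.2 < π p.1).card

/-- The permutation obtained from the word `s_{w 0} s_{w 1} ⋯ s_{w (t-1)}`. -/
def walkPerm (n t : ℕ) (w : Fin t → Fin n) : Equiv.Perm (Fin (n + 1)) :=
  ((List.ofFn w).map (adjT n)).prod

section Aux

lemma swap_lt {n : ℕ} (i : Fin n) {p q : Fin (n+1)} (hpq : p < q)
    (hne : ¬(p = i.castSucc ∧ q = i.succ)) :
    adjT n i p < adjT n i q := by
  rw [not_and_or] at hne
  simp only [adjT, Equiv.swap_apply_def]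
  have hi := i.isLt
  have h1 : (i.castSucc : ℕ) = i := rfl
  have h2 : (i.succ : ℕ) = i + 1 := rfl
  simp only [Fin.lt_def, Fin.ext_iff] at hpq hne ⊢
  split_ifs <;> omega

lemma invCount_mul_adjT (n : ℕ) (π : Equiv.Perm (Fin (n+1))) (i : Fin n) :
    (invCount n (π * adjT n i) : ℤ)
      = invCount n π + (if π i.castSucc < π i.succ then 1 else -1) := by
  classical
  set s := adjT n i with hs
  set e : Fin (n+1) × Fin (n+1) := (i.castSucc, i.succ) with he
  set P : Equiv.Perm (Fin (n+1)) → Finset (Fin (n+1) × Fin (n+1)) :=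
    (fun σ => Finset.univ.filter fun p => p.1 < p.2 ∧ σ p.2 < σ p.1) with hP
  have hss : ∀ x, s (s x) = x := fun x => Equiv.swap_apply_self _ _ x
  have hsic : s i.castSucc = i.succ := Equiv.swap_apply_left _ _
  have hsis : s i.succ = i.castSucc := Equiv.swap_apply_right _ _
  have hlt : i.castSucc < i.succ := Fin.castSucc_lt_succ
  have hmem : ∀ σ p, p ∈ P σ ↔ p.1 < p.2 ∧ σ p.2 < σ p.1 := by
    intro σ p; simp [hP]
  have hcard : ((P (π * s)).erase e).card = ((P π).erase e).card := by
    apply Finset.card_bij' (fun p _ => (s p.1, s p.2)) (fun p _ => (s p.1, s p.2))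
    · rintro ⟨a, b⟩ hab
      rw [Finset.mem_erase, hmem] at hab
      obtain ⟨hne, h1, h2⟩ := hab
      simp only [Equiv.Perm.mul_apply] at h2
      rw [Finset.mem_erase, hmem]
      have hne' : ¬(a = i.castSucc ∧ b = i.succ) := by
        intro ⟨u, v⟩; exact hne (by simp [he, u, v])
      refine ⟨?_, swap_lt i h1 hne', h2⟩
      intro hcon
      rw [he, Prod.mk.injEq] at hcon
      have : a = i.succ := by rw [← hss a, hcon.1, hsic]
      have hb : b = i.castSucc := by rw [← hss b, hcon.2, hsis]
      rw [this, hb] at h1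
      exact absurd h1 (not_lt.2 hlt.le)
    · rintro ⟨a, b⟩ hab
      rw [Finset.mem_erase, hmem] at hab
      obtain ⟨hne, h1, h2⟩ := hab
      rw [Finset.mem_erase, hmem]
      have hne' : ¬(a = i.castSucc ∧ b = i.succ) := by
        intro ⟨u, v⟩; exact hne (by simp [he, u, v])
      refine ⟨?_, swap_lt i h1 hne', by simp only [Equiv.Perm.mul_apply, hss]; exact h2⟩
      intro hcon
      rw [he, Prod.mk.injEq] at hcon
      have : a = i.succ := by rw [← hss a, hcon.1, hsic]
      have hb : b = i.castSucc := by rw [← hss b, hcon.2, hsis]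
      rw [this, hb] at h1
      exact absurd h1 (not_lt.2 hlt.le)
    · rintro ⟨a, b⟩ _; simp [hss]
    · rintro ⟨a, b⟩ _; simp [hss]
  have hinv : ∀ σ, invCount n σ = (P σ).card := fun σ => rfl
  have he1 : e ∈ P (π * s) ↔ π i.castSucc < π i.succ := by
    rw [hmem]
    simp only [he, Equiv.Perm.mul_apply, hsic, hsis]
    exact ⟨fun h => h.2, fun h => ⟨hlt, h⟩⟩
  have he2 : e ∈ P π ↔ π i.succ < π i.castSucc := by
    rw [hmem]; exact ⟨fun h => h.2, fun h => ⟨hlt, h⟩⟩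
  rcases lt_trichotomy (π i.castSucc) (π i.succ) with h | h | h
  · have m1 : e ∈ P (π * s) := he1.2 h
    have m2 : e ∉ P π := fun hc => absurd h (not_lt.2 (he2.1 hc).le)
    have c1 := Finset.card_erase_add_one m1
    rw [Finset.erase_eq_of_notMem m2] at hcard
    rw [hinv, hinv, if_pos h]
    omega
  · exact absurd (π.injective h) (show i.castSucc < i.succ from Fin.castSucc_lt_succ).ne
  · have m1 : e ∉ P (π * s) := fun hc => absurd h (not_lt.2 (he1.1 hc).le)
    have m2 : e ∈ P π := he2.2 h
    have c2 := Finset.card_erase_add_one m2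
    rw [Finset.erase_eq_of_notMem m1] at hcard
    rw [hinv, hinv, if_neg (not_lt.2 h.le)]
    omega

def near {n : ℕ} (i j : Fin n) : Prop :=
  i = j ∨ (i : ℕ) + 1 = j ∨ (j : ℕ) + 1 = i

instance {n : ℕ} (i j : Fin n) : Decidable (near i j) := by unfold near; infer_instance

lemma invCount_one (n : ℕ) : invCount n 1 = 0 := by
  rw [invCount, Finset.card_eq_zero, Finset.filter_eq_empty_iff]
  rintro ⟨a, b⟩ -
  simp only [Equiv.Perm.one_apply, not_and]
  exact fun h => not_lt.2 h.le

lemma invCount_adjT (n : ℕ) (i : Fin n) : invCount n (adjT n i) = 1 := by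
  have := invCount_mul_adjT n 1 i
  rw [one_mul, invCount_one, if_pos] at this
  · omega
  · exact Fin.castSucc_lt_succ

lemma adjT_sq (n : ℕ) (i : Fin n) : adjT n i * adjT n i = 1 := Equiv.swap_mul_self _ _

lemma adjT_comm {n : ℕ} {i j : Fin n} (h : ¬ near i j) :
    adjT n i * adjT n j = adjT n j * adjT n i := by
  have hi := i.isLt
  have hj := j.isLt
  unfold near at h
  push_neg at h
  obtain ⟨hne, hab, hba⟩ := h
  have hne' : (i : ℕ) ≠ j := fun hh => hne (Fin.ext hh)
  clear hne
  ext x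
  simp only [adjT, Equiv.Perm.mul_apply, Equiv.swap_apply_def]
  split_ifs <;>
    simp only [Fin.ext_iff, Fin.coe_castSucc, Fin.val_succ] at * <;> omega

lemma lt1 {n : ℕ} {i j : Fin n} (h : (i : ℕ) ≠ j) :
    adjT n i j.castSucc < adjT n i j.succ := by
  have hi := i.isLt
  have hj := j.isLt
  simp only [adjT, Equiv.swap_apply_def]
  split_ifs <;>
    simp only [Fin.lt_def, Fin.ext_iff, Fin.coe_castSucc, Fin.val_succ] at * <;> omega

lemma lt2 {n : ℕ} {i j k : Fin n} (hij : (i : ℕ) ≠ j) (hjk : (j : ℕ) ≠ k)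
    (hik : (i : ℕ) = k → ((i : ℕ) + 1 = j ∨ (j : ℕ) + 1 = i)) :
    (adjT n i * adjT n j) k.castSucc < (adjT n i * adjT n j) k.succ := by
  have hi := i.isLt
  have hj := j.isLt
  have hk := k.isLt
  simp only [adjT, Equiv.Perm.mul_apply, Equiv.swap_apply_def]
  split_ifs <;>
    simp only [Fin.lt_def, Fin.ext_iff, Fin.coe_castSucc, Fin.val_succ] at * <;> omega

lemma invCount_word {n : ℕ} (i j k : Fin n) :
    invCount n (adjT n i * adjT n j * adjT n k)
      = if i = j ∨ j = k ∨ (i = k ∧ ¬ near i j) then 1 else 3 := by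
  by_cases h1 : i = j
  · subst h1
    rw [adjT_sq, one_mul, invCount_adjT, if_pos (Or.inl rfl)]
  by_cases h2 : j = k
  · subst h2
    rw [mul_assoc, adjT_sq, mul_one, invCount_adjT, if_pos (Or.inr (Or.inl rfl))]
  by_cases h3 : i = k ∧ ¬ near i j
  · obtain ⟨hik, hnear⟩ := h3
    subst hik
    rw [adjT_comm hnear, mul_assoc, adjT_sq, mul_one, invCount_adjT,
      if_pos (Or.inr (Or.inr ⟨rfl, hnear⟩))]
  · rw [if_neg (by tauto)]
    have h1' : (i : ℕ) ≠ j := fun hh => h1 (Fin.ext hh)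
    have h2' : (j : ℕ) ≠ k := fun hh => h2 (Fin.ext hh)
    have hik : (i : ℕ) = k → ((i : ℕ) + 1 = j ∨ (j : ℕ) + 1 = i) := by
      intro u
      rcases not_not.1 (fun hv => h3 ⟨Fin.ext u, hv⟩) with a | a | a
      · exact absurd (Fin.ext_iff.1 a) h1'
      · exact Or.inl a
      · exact Or.inr a
    have s1 := invCount_mul_adjT n (adjT n i) j
    have s2 := invCount_mul_adjT n (adjT n i * adjT n j) k
    rw [if_pos (lt1 h1'), invCount_adjT] at s1
    rw [if_pos (lt2 h1' h2' hik), s1] at s2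
    omega

lemma walkPerm_three (n : ℕ) (w : Fin 3 → Fin n) :
    walkPerm n 3 w = adjT n (w 0) * adjT n (w 1) * adjT n (w 2) := by
  show adjT n (w 0) * (adjT n (w 1) * (adjT n (w 2) * 1)) = _
  rw [mul_one, mul_assoc]

/-- The summand as a function of the values of the three letters. -/
noncomputable def Fv (a b c : ℕ) : ℝ :=
  if a = b ∨ b = c ∨ (a = c ∧ ¬(a = b ∨ a + 1 = b ∨ b + 1 = a)) then 1 else 3

lemma sum_c (n a b : ℕ) (ha : a < n) (hb : b < n) :
    ∑ c ∈ Finset.range n, Fv a b c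
      = 3 * n - 4 + (if a = b then (4 - 2 * (n : ℝ)) else 0)
        + (if a + 1 = b then 2 else 0) + (if b + 1 = a then 2 else 0) := by
  have key : ∀ c ∈ Finset.range n,
      Fv a b c = 3 - (if c = b then (2:ℝ) else 0)
        - (if c = a ∧ ¬(a = b ∨ a + 1 = b ∨ b + 1 = a) then (2:ℝ) else 0)
        + (if a = b then (-2 : ℝ) else 0)
        + (if a = b ∧ b = c then (2:ℝ) else 0) := by
    intro c _
    unfold Fv
    split_ifs <;> first | (exfalso; omega) | norm_num
  rw [Finset.sum_congr rfl key]
  have k2 : ∀ c, (if c = a ∧ ¬(a = b ∨ a + 1 = b ∨ b + 1 = a) then (2:ℝ) else 0)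
      = (if c = a then (if ¬(a = b ∨ a + 1 = b ∨ b + 1 = a) then (2:ℝ) else 0) else 0) :=
    fun c => ite_and _ _ _ _
  have k3 : ∀ c, (if a = b ∧ b = c then (2:ℝ) else 0)
      = (if c = b then (if a = b then (2:ℝ) else 0) else 0) := by
    intro c; split_ifs <;> first | rfl | omega
  simp only [k2, k3, Finset.sum_add_distrib, Finset.sum_sub_distrib, Finset.sum_const,
    Finset.card_range, nsmul_eq_mul, mul_one]
  rw [Finset.sum_ite_eq' (Finset.range n) b (fun _ => (2:ℝ)),
    Finset.sum_ite_eq' (Finset.range n) a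
      (fun _ => (if ¬(a = b ∨ a + 1 = b ∨ b + 1 = a) then (2:ℝ) else 0)),
    Finset.sum_ite_eq' (Finset.range n) b (fun _ => (if a = b then (2:ℝ) else 0))]
  simp only [Finset.mem_range, if_pos ha, if_pos hb]
  split_ifs <;> first | (exfalso; omega) | ring

lemma sum_b (n a : ℕ) (ha : a < n) :
    ∑ b ∈ Finset.range n, (3 * (n:ℝ) - 4 + (if a = b then (4 - 2 * (n : ℝ)) else 0)
        + (if a + 1 = b then 2 else 0) + (if b + 1 = a then 2 else 0))
      = n * (3 * n - 4) + (4 - 2 * (n:ℝ))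
        + (if a + 1 < n then 2 else 0) + (if 0 < a then 2 else 0) := by
  have h3 : ∀ b, (if b + 1 = a then (2:ℝ) else 0)
      = (if b = a - 1 then (if 0 < a then (2:ℝ) else 0) else 0) := by
    intro b; split_ifs <;> first | rfl | omega
  simp only [Finset.sum_add_distrib, Finset.sum_const, Finset.card_range, nsmul_eq_mul, h3]
  rw [Finset.sum_ite_eq (Finset.range n) a (fun _ => (4 - 2 * (n:ℝ))),
    Finset.sum_ite_eq (Finset.range n) (a+1) (fun _ => (2:ℝ)),
    Finset.sum_ite_eq' (Finset.range n) (a-1) (fun _ => (if 0 < a then (2:ℝ) else 0))]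
  simp only [Finset.mem_range]
  rw [if_pos ha, if_pos (show a - 1 < n by omega)]

lemma sum_a (n : ℕ) (hn : 3 ≤ n) :
    ∑ a ∈ Finset.range n, ((n:ℝ) * (3 * n - 4) + (4 - 2 * (n:ℝ))
        + (if a + 1 < n then 2 else 0) + (if 0 < a then 2 else 0))
      = 3 * (n:ℝ)^3 - 6 * (n:ℝ)^2 + 8 * (n:ℝ) - 4 := by
  simp only [Finset.sum_add_distrib, Finset.sum_const, Finset.card_range, nsmul_eq_mul]
  have e1 : Finset.filter (fun a => a + 1 < n) (Finset.range n) = Finset.range (n-1) := by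
    ext a; simp; omega
  have e2 : Finset.filter (fun a => 0 < a) (Finset.range n) = Finset.Ico 1 n := by
    ext a; simp; omega
  rw [Finset.sum_ite, Finset.sum_const, Finset.sum_const, e1,
    Finset.sum_ite, Finset.sum_const, Finset.sum_const, e2]
  simp only [Finset.card_range, Nat.card_Ico, nsmul_eq_mul, mul_zero, add_zero]
  have : ((n - 1 : ℕ) : ℝ) = (n : ℝ) - 1 := by
    rw [Nat.cast_sub (by omega)]; norm_num
  rw [this]
  ring

end Aux

theorem expected_inversions_three_steps (n : ℕ) (hn : 3 ≤ n) :
    (∑ w : Fin 3 → Fin n, (invCount n (walkPerm n 3 w) : ℝ)) / (n : ℝ) ^ 3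
      = 3 - 6 / (n : ℝ) + 8 / (n : ℝ) ^ 2 - 4 / (n : ℝ) ^ 3 := by
  have hn0 : (n : ℝ) ≠ 0 := Nat.cast_ne_zero.2 (by omega)
  have hw : ∀ i j k : Fin n,
      ((invCount n (adjT n i * adjT n j * adjT n k) : ℕ) : ℝ) = Fv ↑i ↑j ↑k := by
    intro i j k
    rw [invCount_word]
    unfold Fv near
    simp only [Fin.ext_iff]
    split_ifs <;> norm_num
  have h0 : (∑ w : Fin 3 → Fin n, (invCount n (walkPerm n 3 w) : ℝ))
      = ∑ w : Fin 3 → Fin n, Fv ↑(w 0) ↑(w 1) ↑(w 2) := by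
    refine Finset.sum_congr rfl fun w _ => ?_
    rw [walkPerm_three]; exact hw _ _ _
  have h1 : (∑ w : Fin 3 → Fin n, Fv ↑(w 0) ↑(w 1) ↑(w 2))
      = ∑ i : Fin n, ∑ j : Fin n, ∑ k : Fin n, Fv ↑i ↑j ↑k := by
    have e : ∑ w : Fin 3 → Fin n, Fv ↑(w 0) ↑(w 1) ↑(w 2)
        = ∑ x : Fin n × Fin n × Fin n, Fv ↑x.1 ↑x.2.1 ↑x.2.2 :=
      Fintype.sum_equiv
        ⟨fun w => (w 0, w 1, w 2), fun p => ![p.1, p.2.1, p.2.2],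
          fun w => by funext i; fin_cases i <;> rfl, fun p => by simp⟩
        _ _ (fun w => rfl)
    rw [e, Fintype.sum_prod_type]
    refine Finset.sum_congr rfl fun i _ => ?_
    rw [Fintype.sum_prod_type]
  have h2 : (∑ i : Fin n, ∑ j : Fin n, ∑ k : Fin n, Fv ↑i ↑j ↑k)
      = ∑ a ∈ Finset.range n, ∑ b ∈ Finset.range n, ∑ c ∈ Finset.range n, Fv a b c := by
    rw [Fin.sum_univ_eq_sum_range (fun a => ∑ j : Fin n, ∑ k : Fin n, Fv a ↑j ↑k) n]
    refine Finset.sum_congr rfl fun a _ => ?_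
    rw [Fin.sum_univ_eq_sum_range (fun b => ∑ k : Fin n, Fv a b ↑k) n]
    refine Finset.sum_congr rfl fun b _ => ?_
    exact Fin.sum_univ_eq_sum_range (fun c => Fv a b c) n
  have h3 : (∑ a ∈ Finset.range n, ∑ b ∈ Finset.range n, ∑ c ∈ Finset.range n, Fv a b c)
      = 3 * (n:ℝ)^3 - 6 * (n:ℝ)^2 + 8 * (n:ℝ) - 4 := by
    rw [← sum_a n hn]
    refine Finset.sum_congr rfl fun a ha => ?_
    rw [Finset.mem_range] at ha
    rw [← sum_b n a ha]
    refine Finset.sum_congr rfl fun b hb => ?_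
    rw [Finset.mem_range] at hb
    exact sum_c n a b ha hb
  rw [h0, h1, h2, h3]
  field_simp
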